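/- Let n be a positive integer. There is no ±1 vector u : ZMod n → ℝ generating a circulant Hadamard matrix if and only if there exist real weights c(γ, d), indexed by characters γ : ZMod n → ZMod 2 and integers d with 1 ≤ d ≤ ⌊n/2⌋, such that for every function M : (ZMod n → ZMod 2) → ℝ one has ∑_{γ} ∑_{d=1}^{⌊n/2⌋} c(γ, d) · ( ∑_{j ∈ ZMod n} M(γ + π_j + π_{j+d}) ) = M(0), where 0 denotes the identically-zero character. -/

import Mathlib

/-- `u` generates a circulant Hadamard matrix: all entries are `±1` and all
non-trivial cyclic autocorrelations vanish. -/
def GeneratesCircHadamard (n : ℕ) [NeZero n] (u : ZMod n → ℝ) : Prop :=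
  (∀ j, u j = 1 ∨ u j = -1) ∧
    ∀ d : ℕ, 1 ≤ d → d ≤ n - 1 → ∑ j : ZMod n, u j * u (j + (d : ZMod n)) = 0

/-- `π_j`, the indicator character of `{j}`. -/
def piChar (n : ℕ) (j : ZMod n) : ZMod n → ZMod 2 :=
  fun i => if i = j then 1 else 0

namespace CircHadAux

noncomputable def sgn : ZMod 2 → ℝ := fun a => (-1 : ℝ) ^ a.val

lemma zmod2_em (a : ZMod 2) : a = 0 ∨ a = 1 := by revert a; decide

lemma z2_add_self (a : ZMod 2) : a + a = 0 := by revert a; decide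

@[simp] lemma sgn_zero : sgn 0 = 1 := rfl
@[simp] lemma sgn_one : sgn 1 = -1 := by
  norm_num [sgn, show (1 : ZMod 2).val = 1 from rfl]

lemma sgn_add (a b : ZMod 2) : sgn (a + b) = sgn a * sgn b := by
  rcases zmod2_em a with rfl | rfl <;> rcases zmod2_em b with rfl | rfl
  · norm_num
  · norm_num
  · norm_num
  · rw [show (1 + 1 : ZMod 2) = 0 by decide]
    norm_num

variable (n : ℕ) [NeZero n]

noncomputable def chi (x γ : ZMod n → ZMod 2) : ℝ := ∏ i, sgn (x i * γ i)

lemma chi_comm (x γ : ZMod n → ZMod 2) : chi n x γ = chi n γ x :=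
  Finset.prod_congr rfl fun i _ => by rw [mul_comm]

lemma chi_add_right (x γ δ : ZMod n → ZMod 2) :
    chi n x (γ + δ) = chi n x γ * chi n x δ := by
  unfold chi
  rw [← Finset.prod_mul_distrib]
  exact Finset.prod_congr rfl fun i _ => by rw [Pi.add_apply, mul_add, sgn_add]

lemma chi_add_left (x y γ : ZMod n → ZMod 2) :
    chi n (x + y) γ = chi n x γ * chi n y γ := by
  rw [chi_comm, chi_add_right, chi_comm n γ x, chi_comm n γ y]

@[simp] lemma chi_zero_right (x : ZMod n → ZMod 2) : chi n x 0 = 1 := by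
  simp [chi]

lemma chi_pi (x : ZMod n → ZMod 2) (j : ZMod n) :
    chi n x (piChar n j) = sgn (x j) := by
  unfold chi piChar
  rw [Finset.prod_eq_single j]
  · simp
  · intro i _ hij
    simp [hij]
  · simp

lemma sum_chi_ne (γ : ZMod n → ZMod 2) (hγ : γ ≠ 0) :
    ∑ x : ZMod n → ZMod 2, chi n x γ = 0 := by
  obtain ⟨i₀, hi₀⟩ : ∃ i, γ i ≠ 0 := by
    by_contra hcon
    push_neg at hcon
    exact hγ (funext hcon)
  have hγi : γ i₀ = 1 := (zmod2_em _).resolve_left hi₀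
  have key : ∀ x, chi n (x + piChar n i₀) γ = - chi n x γ := by
    intro x
    rw [chi_add_left, chi_comm n (piChar n i₀) γ, chi_pi, hγi, sgn_one]
    ring
  have h1 : ∑ x : ZMod n → ZMod 2, chi n (x + piChar n i₀) γ
      = ∑ x : ZMod n → ZMod 2, chi n x γ :=
    Equiv.sum_comp (Equiv.addRight (piChar n i₀)) (fun x => chi n x γ)
  simp only [key, Finset.sum_neg_distrib] at h1
  linarith

/-- The linear functional `M ↦ ∑ j, M (γ + π_j + π_{j+d})`. -/
noncomputable def Tmap (γ : ZMod n → ZMod 2) (d : ℕ) :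
    ((ZMod n → ZMod 2) → ℝ) →ₗ[ℝ] ℝ where
  toFun M := ∑ j : ZMod n, M (γ + piChar n j + piChar n (j + (d : ZMod n)))
  map_add' M N := by simp [Finset.sum_add_distrib]
  map_smul' c M := by simp [Finset.mul_sum]

@[simp] lemma Tmap_apply (γ : ZMod n → ZMod 2) (d : ℕ) (M : (ZMod n → ZMod 2) → ℝ) :
    Tmap n γ d M = ∑ j : ZMod n, M (γ + piChar n j + piChar n (j + (d : ZMod n))) := rfl

lemma corr_shift (u : ZMod n → ℝ) (d : ℕ) (hd : d ≤ n) :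
    ∑ j : ZMod n, u j * u (j + ((n - d : ℕ) : ZMod n))
      = ∑ j : ZMod n, u j * u (j + (d : ZMod n)) := by
  have hc : ((n - d : ℕ) : ZMod n) = - (d : ZMod n) := by
    rw [Nat.cast_sub hd, ZMod.natCast_self, zero_sub]
  rw [hc, ← Equiv.sum_comp (Equiv.addRight ((d : ZMod n)))
    (fun j => u j * u (j + -(d : ZMod n)))]
  refine Finset.sum_congr rfl fun j _ => ?_
  simp [mul_comm]

lemma sum_Icc_one (m : ℕ) (g : ℕ → ℝ) :
    ∑ d ∈ Finset.Icc 1 m, g d = ∑ k : Fin m, g ((k : ℕ) + 1) := by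
  rw [Fin.sum_univ_eq_sum_range (fun k => g (k + 1)), ← Finset.Ico_add_one_right_eq_Icc,
    Finset.sum_Ico_eq_sum_range]
  simp [add_comm]

end CircHadAux

open CircHadAux in
/-- No `±1` vector generates a circulant Hadamard matrix of order `n` if and
only if there exist real weights `c(γ, d)` witnessing that `M(0)` is a linear
combination of the equations of the circulant system. -/
theorem no_circHadamard_iff_exists_witness (n : ℕ) [NeZero n] :
    (¬ ∃ u : ZMod n → ℝ, GeneratesCircHadamard n u) ↔
      ∃ c : (ZMod n → ZMod 2) → ℕ → ℝ,
        ∀ M : (ZMod n → ZMod 2) → ℝ,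
          ∑ γ : ZMod n → ZMod 2, ∑ d ∈ Finset.Icc 1 (n / 2),
            c γ d *
              ∑ j : ZMod n, M (γ + piChar n j + piChar n (j + (d : ZMod n))) =
            M 0 := by
  constructor
  · -- no Hadamard ⇒ witness
    intro h
    -- the family of functionals
    set T : ((ZMod n → ZMod 2) × Fin (n / 2)) → Module.Dual ℝ ((ZMod n → ZMod 2) → ℝ) :=
      fun p => Tmap n p.1 (p.2.1 + 1) with hT
    -- key: any M annihilated by all functionals has M 0 = 0
    have key : ∀ M : (ZMod n → ZMod 2) → ℝ, (∀ p, T p M = 0) → M 0 = 0 := by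
      intro M hM
      have hF : ∀ x : ZMod n → ZMod 2, ∑ γ : ZMod n → ZMod 2, chi n x γ * M γ = 0 := by
        intro x
        have hpm : ∀ i, sgn (x i) = 1 ∨ sgn (x i) = -1 := fun i => by
          rcases zmod2_em (x i) with h' | h' <;> simp [h']
        have hx : ¬ GeneratesCircHadamard n (fun i => sgn (x i)) :=
          fun hc => h ⟨_, hc⟩
        rw [GeneratesCircHadamard, not_and] at hx
        push_neg at hx
        obtain ⟨d, hd1, hd2, hdne⟩ := hx hpm
        obtain ⟨d', hd'1, hd'2, hdne'⟩ :
            ∃ d', 1 ≤ d' ∧ d' ≤ n / 2 ∧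
              (∑ j : ZMod n, sgn (x j) * sgn (x (j + (d' : ZMod n)))) ≠ 0 := by
          have hn2 : 2 ≤ n := by
            rcases Nat.lt_or_ge n 2 with h2 | h2
            · interval_cases n <;> omega
            · exact h2
          by_cases hle : d ≤ n / 2
          · exact ⟨d, hd1, hle, hdne⟩
          · refine ⟨n - d, by omega, by omega, ?_⟩
            rw [show n - d = n - d from rfl]
            rw [corr_shift n (fun i => sgn (x i)) d (by omega)] at *
            · exact hdne
        -- the functional at (γ, d') kills M
        have hMγ : ∀ γ : ZMod n → ZMod 2,
            ∑ j : ZMod n, M (γ + piChar n j + piChar n (j + (d' : ZMod n))) = 0 := by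
          intro γ
          have := hM (γ, ⟨d' - 1, by omega⟩)
          simpa [hT, show d' - 1 + 1 = d' from by omega] using this
        -- combine
        have h0 : (0 : ℝ) = ∑ γ : ZMod n → ZMod 2, chi n x γ *
            ∑ j : ZMod n, M (γ + piChar n j + piChar n (j + (d' : ZMod n))) := by
          simp [hMγ]
        have hswap : ∑ γ : ZMod n → ZMod 2, chi n x γ *
            ∑ j : ZMod n, M (γ + piChar n j + piChar n (j + (d' : ZMod n)))
            = ∑ j : ZMod n, (sgn (x j) * sgn (x (j + (d' : ZMod n)))) *
                ∑ γ : ZMod n → ZMod 2, chi n x γ * M γ := by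
          simp_rw [Finset.mul_sum]
          rw [Finset.sum_comm]
          refine Finset.sum_congr rfl fun j _ => ?_
          set v : ZMod n → ZMod 2 := piChar n j + piChar n (j + (d' : ZMod n)) with hv
          have hvv : ∀ γ : ZMod n → ZMod 2, γ + v + v = γ := by
            intro γ
            funext i
            simp [add_assoc, z2_add_self]
          have := Equiv.sum_comp (Equiv.addRight v)
            (fun γ => chi n x γ * M (γ + piChar n j + piChar n (j + (d' : ZMod n))))
          rw [← this]
          simp only [Equiv.coe_addRight]
          refine Finset.sum_congr rfl fun γ _ => ?_
          have harg : γ + v + piChar n j + piChar n (j + (d' : ZMod n)) = γ := by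
            rw [add_assoc (γ + v), ← hv]
            exact hvv γ
          rw [harg, hv, chi_add_right, chi_add_right, chi_pi, chi_pi]
          ring
        rw [hswap] at h0
        have hsum : ∑ j : ZMod n, (sgn (x j) * sgn (x (j + (d' : ZMod n)))) *
            ∑ γ : ZMod n → ZMod 2, chi n x γ * M γ
            = (∑ j : ZMod n, sgn (x j) * sgn (x (j + (d' : ZMod n)))) *
              ∑ γ : ZMod n → ZMod 2, chi n x γ * M γ := by
          rw [Finset.sum_mul]
        rw [hsum] at h0
        exact (mul_eq_zero.mp h0.symm).resolve_left hdne'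
      -- sum over all x
      have htot : ∑ x : ZMod n → ZMod 2, ∑ γ : ZMod n → ZMod 2, chi n x γ * M γ
          = (Fintype.card (ZMod n → ZMod 2) : ℝ) * M 0 := by
        rw [Finset.sum_comm]
        rw [Finset.sum_eq_single_of_mem (0 : ZMod n → ZMod 2) (Finset.mem_univ _)]
        · simp [Finset.sum_mul, mul_comm]
        · intro γ _ hγ
          rw [← Finset.sum_mul, sum_chi_ne n γ hγ, zero_mul]
      rw [Finset.sum_congr rfl (fun x _ => hF x), Finset.sum_const, smul_zero] at htot
      have hcard : (Fintype.card (ZMod n → ZMod 2) : ℝ) ≠ 0 := by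
        exact_mod_cast Fintype.card_ne_zero
      field_simp at htot
      exact (mul_eq_zero.mp htot.symm).resolve_left hcard
    -- duality: the evaluation functional lies in the span
    have mem : (LinearMap.proj (0 : ZMod n → ZMod 2) :
        ((ZMod n → ZMod 2) → ℝ) →ₗ[ℝ] ℝ) ∈ Submodule.span ℝ (Set.range T) := by
      rw [← Subspace.dualCoannihilator_dualAnnihilator_eq
        (W := Submodule.span ℝ (Set.range T))]
      rw [Submodule.mem_dualAnnihilator]
      intro M hM
      rw [Submodule.mem_dualCoannihilator] at hM
      have : M 0 = 0 := key M fun p => hM (T p) (Submodule.subset_span ⟨p, rfl⟩)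
      simpa using this
    rw [Submodule.mem_span_range_iff_exists_fun] at mem
    obtain ⟨co, hco⟩ := mem
    refine ⟨fun γ d => if hd : 1 ≤ d ∧ d ≤ n / 2 then co (γ, ⟨d - 1, by omega⟩) else 0, ?_⟩
    intro M
    have happ : (∑ p : (ZMod n → ZMod 2) × Fin (n / 2), co p • T p) M = M 0 := by
      rw [hco]; simp
    rw [LinearMap.sum_apply] at happ
    simp only [LinearMap.smul_apply, smul_eq_mul, hT, Tmap_apply] at happ
    rw [← happ, Fintype.sum_prod_type]
    refine Finset.sum_congr rfl fun γ _ => ?_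
    rw [sum_Icc_one]
    refine Finset.sum_congr rfl fun k _ => ?_
    have hk : 1 ≤ (k : ℕ) + 1 ∧ (k : ℕ) + 1 ≤ n / 2 := ⟨by omega, by omega⟩
    dsimp only
    rw [dif_pos hk]
    simp only [Nat.add_sub_cancel, Fin.eta]
  · -- witness ⇒ no Hadamard
    rintro ⟨c, hc⟩ ⟨u, hpm, hcorr⟩
    set x : ZMod n → ZMod 2 := fun i => if u i = 1 then 0 else 1 with hx
    have hsx : ∀ i, sgn (x i) = u i := by
      intro i
      rcases hpm i with h' | h' <;> norm_num [hx, h']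
    have this1 := hc (chi n x)
    rw [chi_zero_right] at this1
    have hz : ∑ γ : ZMod n → ZMod 2, ∑ d ∈ Finset.Icc 1 (n / 2),
        c γ d * ∑ j : ZMod n, chi n x (γ + piChar n j + piChar n (j + (d : ZMod n)))
        = 0 := by
      rcases Nat.lt_or_ge n 2 with h2 | h2
      · have hn1 : n = 1 := by
          have := NeZero.pos n
          omega
        subst hn1
        simp
      · refine Finset.sum_eq_zero fun γ _ => ?_
        refine Finset.sum_eq_zero fun d hd => ?_
        rw [Finset.mem_Icc] at hd
        obtain ⟨hd1, hd2⟩ := hd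
        have hinner : ∑ j : ZMod n, chi n x (γ + piChar n j + piChar n (j + (d : ZMod n)))
            = chi n x γ * ∑ j : ZMod n, u j * u (j + (d : ZMod n)) := by
          rw [Finset.mul_sum]
          refine Finset.sum_congr rfl fun j _ => ?_
          rw [chi_add_right, chi_add_right, chi_pi, chi_pi, hsx, hsx]
          ring
        rw [hinner, hcorr d hd1 (by omega), mul_zero, mul_zero]
    rw [hz] at this1
    exact one_ne_zero this1.symm
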